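/- arXiv:2410.24202 — 3 statements merged into one kernel-verified Lean document; each statement's English description precedes it below -/
import Mathlib

section
/- Let f : F_2^{2n} → ℝ be a nonnegative function satisfying the Fourier inversion identity f(z) = (1/2^n) Σ_{z' ∈ F_2^{2n}} (-1)^{[z,z']} f(z') for all z. Then for any linear subspace V ⊆ F_2^{2n} and any z' ∈ F_2^{2n}, Σ_{z∈V} f(z) ≥ Σ_{z∈V} f(z + z'). -/
open Finset
open scoped Classical

abbrev BV (n : ℕ) := Fin n → ZMod 2
abbrev Pt (n : ℕ) := BV n × BV n

def dotp {n : ℕ} (x y : BV n) : ZMod 2 := ∑ i, x i * y i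
def symp {n : ℕ} (z w : Pt n) : ZMod 2 := dotp z.1 w.2 + dotp w.1 z.2
def sgn (b : ZMod 2) : ℝ := (-1 : ℝ) ^ b.val

lemma two01 (a : ZMod 2) : a = 0 ∨ a = 1 := by revert a; decide

lemma sgn_zero : sgn 0 = 1 := by
  simp [sgn, ZMod.val_zero]

lemma sgn_one : sgn 1 = -1 := by
  have : (1 : ZMod 2).val = 1 := rfl
  simp [sgn, this]

lemma sgn_add (a b : ZMod 2) : sgn (a + b) = sgn a * sgn b := by
  rcases two01 a with rfl | rfl <;> rcases two01 b with rfl | rfl <;>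
    simp [sgn_zero, sgn_one, (by decide : (1 : ZMod 2) + 1 = 0)]

lemma sgn_le_one (a : ZMod 2) : sgn a ≤ 1 := by
  rcases two01 a with rfl | rfl <;> norm_num [sgn_zero, sgn_one]

lemma dotp_add_left {n : ℕ} (x y v : BV n) : dotp (x + y) v = dotp x v + dotp y v := by
  simp [dotp, add_mul, Finset.sum_add_distrib]

lemma dotp_add_right {n : ℕ} (v x y : BV n) : dotp v (x + y) = dotp v x + dotp v y := by
  simp [dotp, mul_add, Finset.sum_add_distrib]

lemma symp_add_left {n : ℕ} (z1 z2 w : Pt n) :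
    symp (z1 + z2) w = symp z1 w + symp z2 w := by
  simp only [symp, Prod.fst_add, Prod.snd_add, dotp_add_left, dotp_add_right]
  ring

lemma symp_zero_left {n : ℕ} (w : Pt n) : symp 0 w = 0 := by
  simp [symp, dotp]

lemma add_self_pt {n : ℕ} (z : Pt n) : z + z = 0 := by
  ext i <;> simp [CharTwo.add_self_eq_zero]

lemma char_sum {n : ℕ} (V : Submodule (ZMod 2) (Pt n)) (w : Pt n) :
    (∑ z ∈ Finset.univ.filter (· ∈ V), sgn (symp z w)) = 0 ∨
    (∑ z ∈ Finset.univ.filter (· ∈ V), sgn (symp z w))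
      = (Finset.univ.filter (· ∈ V)).card := by
  by_cases h : ∀ z ∈ V, symp z w = 0
  · right
    rw [Finset.sum_congr rfl (fun z hz => by
      rw [h z (Finset.mem_filter.mp hz).2, sgn_zero])]
    simp
  · left
    push_neg at h
    obtain ⟨z0, hz0V, hz0⟩ := h
    have hs1 : symp z0 w = 1 := by
      rcases two01 (symp z0 w) with h | h
      · exact absurd h hz0
      · exact h
    have key : ∑ z ∈ Finset.univ.filter (· ∈ V), sgn (symp z w)
        = ∑ z ∈ Finset.univ.filter (· ∈ V), sgn (symp (z + z0) w) := by
      refine Finset.sum_nbij' (fun z => z + z0) (fun z => z + z0) ?_ ?_ ?_ ?_ ?_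
      · intro a ha
        simp only [Finset.mem_filter, Finset.mem_univ, true_and] at ha ⊢
        exact V.add_mem ha hz0V
      · intro a ha
        simp only [Finset.mem_filter, Finset.mem_univ, true_and] at ha ⊢
        exact V.add_mem ha hz0V
      · intro a _; show a + z0 + z0 = a; rw [add_assoc, add_self_pt, add_zero]
      · intro a _; show a + z0 + z0 = a; rw [add_assoc, add_self_pt, add_zero]
      · intro a _; show sgn (symp a w) = sgn (symp (a + z0 + z0) w)
        rw [add_assoc, add_self_pt, add_zero]
    have hneg : ∀ z : Pt n, sgn (symp (z + z0) w) = - sgn (symp z w) := by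
      intro z
      rw [symp_add_left, sgn_add, hs1, sgn_one]; ring
    simp only [hneg, Finset.sum_neg_distrib] at key
    linarith

/-- If `f : F_2^{2n} → ℝ` is nonnegative and satisfies the symplectic Fourier inversion
identity, then for any linear subspace `V` and any shift `z'`,
`∑_{z ∈ V} f(z) ≥ ∑_{z ∈ V} f(z + z')`. -/
theorem stmt1 (n : ℕ) (f : Pt n → ℝ) (hf : ∀ z, 0 ≤ f z)
    (hinv : ∀ z, f z = (1 / 2 ^ n) * ∑ z', sgn (symp z z') * f z')
    (V : Submodule (ZMod 2) (Pt n)) (z' : Pt n) :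
    ∑ z ∈ Finset.univ.filter (· ∈ V), f (z + z') ≤
      ∑ z ∈ Finset.univ.filter (· ∈ V), f z := by
  set VF := Finset.univ.filter (· ∈ V) with hVF
  set c : Pt n → ℝ := fun w => ∑ z ∈ VF, sgn (symp z w) with hc
  have hcnn : ∀ w, 0 ≤ c w := by
    intro w
    rcases char_sum V w with h | h
    · exact le_of_eq h.symm
    · have h' : c w = ((Finset.univ.filter (· ∈ V)).card : ℝ) := h
      rw [h']; exact Nat.cast_nonneg _
  have key : ∀ u : Pt n, ∑ z ∈ VF, f (z + u)
      = (1 / 2 ^ n) * ∑ w, c w * (sgn (symp u w) * f w) := by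
    intro u
    have h1 : ∀ z ∈ VF, f (z + u)
        = (1 / 2 ^ n) * ∑ w, sgn (symp z w) * (sgn (symp u w) * f w) := by
      intro z _
      rw [hinv (z + u)]
      congr 1
      apply Finset.sum_congr rfl
      intro w _
      rw [symp_add_left, sgn_add]; ring
    rw [Finset.sum_congr rfl h1, ← Finset.mul_sum, Finset.sum_comm]
    congr 1
    apply Finset.sum_congr rfl
    intro w _
    rw [hc]
    simp only [Finset.sum_mul]
  have h0 : ∑ z ∈ VF, f z = (1 / 2 ^ n) * ∑ w, c w * f w := by
    have hk := key 0
    simp only [add_zero] at hk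
    rw [hk]
    congr 1
    apply Finset.sum_congr rfl
    intro w _
    rw [symp_zero_left, sgn_zero]; ring
  rw [key z', h0]
  apply mul_le_mul_of_nonneg_left _ (by positivity)
  apply Finset.sum_le_sum
  intro w _
  calc c w * (sgn (symp z' w) * f w) ≤ c w * (1 * f w) := by
        apply mul_le_mul_of_nonneg_left _ (hcnn w)
        exact mul_le_mul_of_nonneg_right (sgn_le_one _) (hf w)
    _ = c w * f w := by ring
end

section
/- Let S ⊆ F_2^{2n}, and let V ⊆ F_2^{2n} be an affine subspace. Let U = {y ∈ F_2^n : ∃ y' such that (y,y') ∈ V} be the projection of V onto the first n coordinates. Then there exists an affine map ℓ : F_2^n → F_2^n whose graph G(ℓ) = {(y, ℓ(y)) : y ∈ F_2^n} satisfies |G(ℓ) ∩ S| ≥ |S ∩ V| · |U| / |V|. -/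
open Finset
open scoped Classical

/-- For `S ⊆ F_2^{2n}` and an affine subspace `V = w + W`, with `U` the projection of `V`
onto the first `n` coordinates, there exists an affine map `ℓ(y) = L y + b` whose graph
satisfies `|G(ℓ) ∩ S| ≥ |S ∩ V| · |U| / |V|`. -/
theorem stmt2 (n : ℕ) (S : Set (Pt n)) (w : Pt n) (W : Submodule (ZMod 2) (Pt n)) :
    let V : Set (Pt n) := (fun v => w + v) '' (W : Set (Pt n))
    let U : Set (BV n) := {y | ∃ y', (y, y') ∈ V}
    ∃ (L : BV n →ₗ[ZMod 2] BV n) (b : BV n),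
      ((S ∩ V).ncard : ℝ) * U.ncard / V.ncard ≤
        (({p : Pt n | p.2 = L p.1 + b} ∩ S).ncard : ℝ) := by
  intro V U
  classical
  -- membership criterion for V
  have hV : ∀ p : Pt n, p ∈ V ↔ p - w ∈ W := by
    intro p
    constructor
    · rintro ⟨v, hv, rfl⟩; simpa using hv
    · intro h; exact ⟨p - w, h, by show w + (p - w) = p; rw [add_comm, sub_add_cancel]⟩
  set K : Submodule (ZMod 2) (BV n) :=
    W.comap (LinearMap.inr (ZMod 2) (BV n) (BV n)) with hKdef
  have hKmem : ∀ y : BV n, y ∈ K ↔ ((0 : BV n), y) ∈ W := by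
    intro y; simp [hKdef, Submodule.mem_comap]
  -- a linear section of the first projection restricted to W
  set f : W →ₗ[ZMod 2] BV n := (LinearMap.fst (ZMod 2) (BV n) (BV n)).comp W.subtype with hfdef
  obtain ⟨g, hg⟩ := f.rangeRestrict.exists_rightInverse_of_surjective
    (LinearMap.range_eq_top.2 (LinearMap.surjective_rangeRestrict f))
  obtain ⟨q, hq⟩ := Submodule.exists_isCompl (LinearMap.range f)
  set σ : BV n →ₗ[ZMod 2] Pt n :=
    W.subtype.comp (g.comp ((LinearMap.range f).linearProjOfIsCompl q hq)) with hσdef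
  have hσW : ∀ x, σ x ∈ W := fun x => (g _).2
  have hσ1 : ∀ x ∈ LinearMap.range f, (σ x : Pt n).1 = x := by
    intro x hx
    have h1 : ((LinearMap.range f).linearProjOfIsCompl q hq) x = ⟨x, hx⟩ :=
      Submodule.linearProjOfIsCompl_apply_left hq ⟨x, hx⟩
    have h2 := congrArg Subtype.val (LinearMap.congr_fun hg (⟨x, hx⟩ : LinearMap.range f))
    simp only [LinearMap.comp_apply, LinearMap.id_apply] at h2
    have h3 : (↑(f.rangeRestrict (g ⟨x, hx⟩)) : BV n) = f (g ⟨x, hx⟩) := rfl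
    simp only [hσdef, LinearMap.comp_apply, h1]
    show f (g ⟨x, hx⟩) = x
    rw [← h3, h2]
  have hmem1 : ∀ v : Pt n, v ∈ W → v.1 ∈ LinearMap.range f := by
    intro v hv; exact ⟨⟨v, hv⟩, rfl⟩
  -- the base affine map
  set Lmap : BV n →ₗ[ZMod 2] BV n := (LinearMap.snd (ZMod 2) (BV n) (BV n)).comp σ with hLdef
  set ℓ₀ : BV n → BV n := fun y => Lmap y + (w.2 - Lmap w.1) with hℓdef
  -- the graph of ℓ₀ over U sits inside V
  have hgraph₀ : ∀ u ∈ U, (u, ℓ₀ u) ∈ V := by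
    intro u hu
    obtain ⟨y', hy'⟩ := hu
    have hu0 : u - w.1 ∈ LinearMap.range f := by
      have := (hV _).1 hy'
      have h1 : ((u, y') - w).1 = u - w.1 := rfl
      exact h1 ▸ hmem1 _ this
    rw [hV]
    have : (u, ℓ₀ u) - w = σ (u - w.1) := by
      have h1 : (σ (u - w.1)).1 = u - w.1 := hσ1 _ hu0
      have h2 : (σ (u - w.1)).2 = Lmap u - Lmap w.1 := by
        simp [hLdef, map_sub]
      ext1
      · simpa using h1.symm
      · show ℓ₀ u - w.2 = (σ (u - w.1)).2
        rw [h2, hℓdef]; show Lmap u + (w.2 - Lmap w.1) - w.2 = Lmap u - Lmap w.1; abel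
    rw [this]; exact hσW _
  -- fibers of V over U are cosets of K
  have hfiber : ∀ p ∈ V, p.2 - ℓ₀ p.1 ∈ K := by
    intro p hp
    have hpw : p - w ∈ W := (hV p).1 hp
    have h1 : (p - w).1 ∈ LinearMap.range f := hmem1 _ hpw
    have hσmem := hσW ((p - w).1)
    have hKel : (p - w) - σ ((p - w).1) ∈ W := W.sub_mem hpw hσmem
    have hfst : ((p - w) - σ ((p - w).1)).1 = 0 := by
      have := hσ1 _ h1
      show (p - w).1 - (σ ((p - w).1)).1 = 0
      rw [this]; abel
    have heq : (p - w) - σ ((p - w).1) = ((0 : BV n), (p - w).2 - (σ ((p - w).1)).2) := by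
      ext1
      · exact hfst
      · rfl
    rw [heq] at hKel
    have hval : p.2 - ℓ₀ p.1 = (p - w).2 - (σ ((p - w).1)).2 := by
      have h2 : (σ ((p - w).1)).2 = Lmap p.1 - Lmap w.1 := by
        show ((LinearMap.snd (ZMod 2) (BV n) (BV n)).comp σ) ((p-w).1) = _
        rw [← hLdef]
        have : (p - w).1 = p.1 - w.1 := rfl
        rw [this, map_sub]
      rw [h2, hℓdef]
      show p.2 - (Lmap p.1 + (w.2 - Lmap w.1)) = p.2 - w.2 - (Lmap p.1 - Lmap w.1)
      abel
    rw [hval, hKmem]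
    exact hKel
  -- adding an element of K stays in V
  have hgadd : ∀ u ∈ U, ∀ k ∈ K, (u, ℓ₀ u + k) ∈ V := by
    intro u hu k hk
    rw [hV]
    have h1 : (u, ℓ₀ u) - w ∈ W := (hV _).1 (hgraph₀ u hu)
    have h2 : ((0 : BV n), k) ∈ W := (hKmem k).1 hk
    have : (u, ℓ₀ u + k) - w = ((u, ℓ₀ u) - w) + ((0 : BV n), k) := by
      ext1
      · show u - w.1 = u - w.1 + 0; rw [add_zero]
      · show ℓ₀ u + k - w.2 = (ℓ₀ u - w.2) + k; abel
    rw [this]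
    exact W.add_mem h1 h2
  have hw1U : w.1 ∈ U := ⟨w.2, by rw [hV]; simpa using W.zero_mem⟩
  -- the candidate graphs
  set gset : BV n → Set (Pt n) :=
    fun c => {p : Pt n | p.2 = Lmap p.1 + (w.2 - Lmap w.1 + c)} with hgsetdef
  have hgmem : ∀ c (p : Pt n), p ∈ gset c ↔ p.2 - ℓ₀ p.1 = c := by
    intro c p
    rw [hgsetdef]
    simp only [Set.mem_setOf_eq, hℓdef]
    rw [sub_eq_iff_eq_add', add_assoc]
  -- finset versions
  set sFin : Finset (Pt n) := (S ∩ V).toFinset with hsFin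
  set Kfin : Finset (BV n) := (K : Set (BV n)).toFinset with hKfin
  have hKne : Kfin.Nonempty := ⟨0, by rw [hKfin, Set.mem_toFinset]; exact K.zero_mem⟩
  have hKpos : 0 < Kfin.card := Finset.card_pos.2 hKne
  have hcount : sFin.card = ∑ c ∈ Kfin, (sFin.filter (fun p => p.2 - ℓ₀ p.1 = c)).card := by
    apply Finset.card_eq_sum_card_fiberwise
    intro p hp
    rw [hsFin, Finset.mem_coe, Set.mem_toFinset] at hp
    rw [hKfin, Finset.mem_coe, Set.mem_toFinset]
    exact hfiber p hp.2
  have hle : ∀ c : BV n,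
      (sFin.filter (fun p => p.2 - ℓ₀ p.1 = c)).card ≤ ((gset c ∩ S).toFinset).card := by
    intro c
    apply Finset.card_le_card
    intro p hp
    rw [Finset.mem_filter, hsFin, Set.mem_toFinset] at hp
    rw [Set.mem_toFinset]
    exact ⟨(hgmem c p).2 hp.2, hp.1.1⟩
  have hnat : sFin.card ≤ ∑ c ∈ Kfin, ((gset c ∩ S).toFinset).card := by
    rw [hcount]
    exact Finset.sum_le_sum fun c _ => hle c
  -- averaging
  have hK0 : (Kfin.card : ℝ) ≠ 0 := Nat.cast_ne_zero.2 hKpos.ne'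
  have hsum : ∑ c ∈ Kfin, ((sFin.card : ℝ) / Kfin.card) ≤
      ∑ c ∈ Kfin, (((gset c ∩ S).toFinset).card : ℝ) := by
    rw [Finset.sum_const, nsmul_eq_mul, mul_div_cancel₀ _ hK0]
    exact_mod_cast hnat
  obtain ⟨c, hcK, hc⟩ := Finset.exists_le_of_sum_le hKne hsum
  refine ⟨Lmap, w.2 - Lmap w.1 + c, ?_⟩
  -- cardinality of V
  set φ : Pt n → Pt n := fun p => (p.1, p.2 - ℓ₀ p.1) with hφdef
  have himg : φ '' V = U ×ˢ (K : Set (BV n)) := by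
    apply Set.Subset.antisymm
    · rintro _ ⟨p, hp, rfl⟩
      refine Set.mem_prod.2 ⟨⟨p.2, ?_⟩, hfiber p hp⟩
      show (p.1, p.2) ∈ V
      simpa using hp
    · rintro ⟨u, k⟩ hk
      obtain ⟨hu, hkK⟩ := Set.mem_prod.1 hk
      refine ⟨(u, ℓ₀ u + k), hgadd u hu k hkK, ?_⟩
      show (u, ℓ₀ u + k - ℓ₀ u) = (u, k)
      rw [add_sub_cancel_left]
  have hinj : Set.InjOn φ V := by
    intro p _ p' _ h
    simp only [hφdef, Prod.mk.injEq] at h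
    obtain ⟨h1, h2⟩ := h
    rw [h1] at h2
    exact Prod.ext h1 (sub_left_inj.1 h2)
  have hVcard : V.ncard = U.ncard * (K : Set (BV n)).ncard := by
    rw [← Set.ncard_image_of_injOn hinj, himg]
    rw [Set.ncard_eq_toFinset_card', Set.ncard_eq_toFinset_card', Set.ncard_eq_toFinset_card',
      Set.toFinset_prod, Finset.card_product]
  have hKcard : (K : Set (BV n)).ncard = Kfin.card := by
    rw [hKfin, Set.ncard_eq_toFinset_card']
  have hUpos : 0 < U.ncard := (Set.ncard_pos (Set.toFinite U)).2 ⟨w.1, hw1U⟩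
  have hSV : (S ∩ V).ncard = sFin.card := by rw [hsFin, Set.ncard_eq_toFinset_card']
  have hG : ({p : Pt n | p.2 = Lmap p.1 + (w.2 - Lmap w.1 + c)} ∩ S).ncard
      = ((gset c ∩ S).toFinset).card := Set.ncard_eq_toFinset_card' _
  rw [hSV, hG, hVcard, hKcard]
  have hU0 : (U.ncard : ℝ) ≠ 0 := Nat.cast_ne_zero.2 hUpos.ne'
  rw [Nat.cast_mul]
  calc ((sFin.card : ℝ)) * U.ncard / (U.ncard * Kfin.card)
      = (sFin.card : ℝ) / Kfin.card := by
        rw [mul_comm (U.ncard : ℝ) (Kfin.card : ℝ), mul_div_mul_right _ _ hU0]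
    _ ≤ _ := hc
end

section
/- Let S ⊆ F_2^m be a finite nonempty set such that Pr_{z1,z2 ∈ S}[z1 + z2 ∈ S] ≥ ε (probabilities over independent uniform z1, z2 ∈ S). Then, assuming the Balog–Szemerédi–Gowers theorem (there is S' ⊆ S with |S'| ≥ (ε/3)|S| and |S'+S'| ≤ (6/ε)^8 |S|) and the polynomial Freiman–Ruzsa theorem over F_2 (any T with |T+T| ≤ K|T| is covered by (2K)^8 translates of a subspace of size at most |T|), there exists an affine subspace V ⊆ F_2^m with |S ∩ V| ≥ (ε^{73} / (3·6^{72})) |S| and |V| ≤ |S|. -/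
open Finset
open scoped Classical Pointwise

/-- If `S ⊆ F_2^m` satisfies `Pr_{z1,z2 ∈ S}[z1 + z2 ∈ S] ≥ ε`, then, assuming the
Balog–Szemerédi–Gowers theorem for `S` and the polynomial Freiman–Ruzsa theorem over `F_2`,
there exists an affine subspace `V = w + W` with `|S ∩ V| ≥ (ε^73 / (3·6^72)) |S|` and
`|V| ≤ |S|`. -/
theorem stmt5 (m : ℕ) (ε : ℝ) (hε : 0 < ε) (S : Finset (BV m)) (hS : S.Nonempty)
    (hprob : ε * (S.card : ℝ) ^ 2 ≤
      (((S ×ˢ S).filter (fun p => p.1 + p.2 ∈ S)).card : ℝ))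
    (hBSG : ∃ S' ⊆ S, (ε / 3) * (S.card : ℝ) ≤ (S'.card : ℝ) ∧
      ((S' + S').card : ℝ) ≤ (6 / ε) ^ 8 * (S.card : ℝ))
    (hPFR : ∀ (T : Finset (BV m)) (K : ℝ), T.Nonempty →
      ((T + T).card : ℝ) ≤ K * (T.card : ℝ) →
      ∃ (W : Submodule (ZMod 2) (BV m)) (Cs : Finset (BV m)),
        (Cs.card : ℝ) ≤ (2 * K) ^ 8 ∧ (Nat.card W : ℝ) ≤ (T.card : ℝ) ∧
        ↑T ⊆ ⋃ c ∈ Cs, (fun v => c + v) '' (W : Set (BV m))) :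
    ∃ (w : BV m) (W : Submodule (ZMod 2) (BV m)),
      (ε ^ 73 / (3 * 6 ^ 72)) * (S.card : ℝ) ≤
        ((S.filter (· ∈ (fun v => w + v) '' (W : Set (BV m)))).card : ℝ) ∧
      Nat.card W ≤ S.card := by
  obtain ⟨S', hS'sub, hS'card, hS'sum⟩ := hBSG
  have hScard_pos : 0 < (S.card : ℝ) := by exact_mod_cast card_pos.mpr hS
  have hS'pos : (0:ℝ) < S'.card := lt_of_lt_of_le (by positivity) hS'card
  have hS'ne : S'.Nonempty := card_pos.mp (by exact_mod_cast hS'pos)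
  have hKbound : ((S' + S').card : ℝ) ≤ (3 * 6 ^ 8 / ε ^ 9) * S'.card := by
    have h1 : (S.card : ℝ) ≤ 3 / ε * S'.card := by
      rw [div_mul_eq_mul_div, le_div_iff₀ hε]
      nlinarith [hS'card]
    calc ((S'+S').card : ℝ) ≤ (6/ε)^8 * S.card := hS'sum
      _ ≤ (6/ε)^8 * (3/ε * S'.card) :=
          mul_le_mul_of_nonneg_left h1 (by positivity)
      _ = (3 * 6^8 / ε^9) * S'.card := by field_simp
  obtain ⟨W, Cs, hCs, hW, hcov⟩ := hPFR S' _ hS'ne hKbound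
  have hCsbound : (Cs.card : ℝ) ≤ 6 ^ 72 / ε ^ 72 := by
    calc (Cs.card:ℝ) ≤ (2 * (3 * 6^8 / ε^9))^8 := hCs
      _ = 6^72 / ε^72 := by
          field_simp
          ring
  have hsub : S' ⊆ Cs.biUnion
      (fun c => S'.filter (· ∈ (fun v => c + v) '' (W : Set (BV m)))) := by
    intro x hx
    have hx' := hcov hx
    simp only [Set.mem_iUnion] at hx'
    obtain ⟨c, hc, hxc⟩ := hx'
    simp only [mem_biUnion]
    exact ⟨c, hc, mem_filter.mpr ⟨hx, hxc⟩⟩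
  have hsum : (S'.card : ℝ) ≤
      ∑ c ∈ Cs, ((S'.filter (· ∈ (fun v => c + v) '' (W : Set (BV m)))).card : ℝ) := by
    have h := (card_le_card hsub).trans card_biUnion_le
    exact_mod_cast h
  set t := ε ^ 73 / (3 * 6 ^ 72) * (S.card : ℝ) with ht
  have ht0 : 0 ≤ t := by positivity
  have hCsne : Cs.Nonempty := by
    obtain ⟨x, hx⟩ := hS'ne
    have hx' := hcov hx
    simp only [Set.mem_iUnion] at hx'
    obtain ⟨c, hc, _⟩ := hx'
    exact ⟨c, hc⟩
  have hex : ∃ c ∈ Cs, t ≤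
      ((S'.filter (· ∈ (fun v => c + v) '' (W : Set (BV m)))).card : ℝ) := by
    by_contra h
    push_neg at h
    have hlt : ∑ c ∈ Cs,
        ((S'.filter (· ∈ (fun v => c + v) '' (W : Set (BV m)))).card : ℝ) <
        ∑ _c ∈ Cs, t :=
      Finset.sum_lt_sum_of_nonempty hCsne (fun c hc => h c hc)
    rw [Finset.sum_const, nsmul_eq_mul] at hlt
    have h2 : (Cs.card:ℝ) * t ≤ (6^72/ε^72) * t := mul_le_mul_of_nonneg_right hCsbound ht0
    have htS : (6^72/ε^72) * t = ε/3 * S.card := by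
      rw [ht]; field_simp
    linarith [hS'card]
  obtain ⟨c, hc, hct⟩ := hex
  refine ⟨c, W, ?_, ?_⟩
  · refine hct.trans ?_
    exact_mod_cast card_le_card (filter_subset_filter _ hS'sub)
  · have h3 : (Nat.card W : ℝ) ≤ S.card :=
      hW.trans (by exact_mod_cast card_le_card hS'sub)
    exact_mod_cast h3
end
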